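/- Under these hypotheses the stopping boundary a is left-continuous at t₀, i.e. lim_{t↑t₀} a(t) = a(t₀). -/

import Mathlib

open Set Filter MeasureTheory intervalIntegral

set_option maxHeartbeats 1000000 in
/-- under the stated hypotheses (free-boundary problem structure,
`Θ(t₀,·) ≤ 0` below `a(t₀)` and `∂ₓh(t₀,a(t₀)) > 0`), the stopping boundary `a`
is left-continuous at `t₀`. -/
theorem stmt_8 (T t₀ σ₀ r : ℝ) (hT : 0 < T) (ht₀ : t₀ ∈ Set.Ioo 0 T)
    (hσ₀ : 0 < σ₀) (hr : 0 ≤ r)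
    (μ : ℝ → ℝ) (hμ : ContDiff ℝ 1 μ)
    (g g' : ℝ → ℝ) (hg : ∀ t, HasDerivAt g (g' t) t) (hg' : Continuous g')
    (h hx : ℝ × ℝ → ℝ)
    (hh : ContinuousOn h (Set.Icc 0 T ×ˢ Set.univ))
    (hhx : ∀ p ∈ (Set.Icc 0 T ×ˢ Set.univ : Set (ℝ × ℝ)),
      HasDerivAt (fun x => h (p.1, x)) (hx p) p.2)
    (hhxc : ContinuousOn hx (Set.Icc 0 T ×ˢ Set.univ))
    (v : ℝ × ℝ → ℝ) (hv : ContinuousOn v (Set.Icc 0 T ×ˢ Set.univ))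
    (a : ℝ → ℝ) (ha : MonotoneOn a (Set.Ico 0 T))
    (h1 : ∀ t ∈ Set.Ico (0:ℝ) T, ∀ x ≤ a t, v (t, x) = g t)
    (h2 : ∀ t ∈ Set.Icc (0:ℝ) T, ∀ x : ℝ, g t ≤ v (t, x))
    (h3 : ∀ x : ℝ, ∀ s ∈ Set.Icc (0:ℝ) T, ∀ t ∈ Set.Icc (0:ℝ) T, s ≤ t →
      v (t, x) - g t ≤ v (s, x) - g s)
    (C : Set (ℝ × ℝ)) (hC : C = {p : ℝ × ℝ | p.1 ∈ Set.Ioo 0 T ∧ a p.1 < p.2})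
    (vt vx vxx : ℝ × ℝ → ℝ)
    (hvt : ∀ p ∈ C, HasDerivAt (fun t => v (t, p.2)) (vt p) p.1)
    (hvx : ∀ p ∈ C, HasDerivAt (fun x => v (p.1, x)) (vx p) p.2)
    (hvxx : ∀ p ∈ C, HasDerivAt (fun x => vx (p.1, x)) (vxx p) p.2)
    (hvtc : ContinuousOn vt C) (hvxc : ContinuousOn vx C) (hvxxc : ContinuousOn vxx C)
    (h4 : ∀ p ∈ C, 0 ≤ vt p + σ₀ ^ 2 / 2 * vxx p + μ p.2 * vx p - r * v p + h p)
    (h5 : ∀ x ≤ a t₀, g' t₀ - r * g t₀ + h (t₀, x) ≤ 0)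
    (h6 : 0 < hx (t₀, a t₀)) :
    Filter.Tendsto a (nhdsWithin t₀ (Set.Iio t₀)) (nhds (a t₀)) := by
  obtain ⟨ht0, htT⟩ := ht₀
  have ht₀m : t₀ ∈ Set.Icc (0:ℝ) T := ⟨ht0.le, htT.le⟩
  set L := sSup (a '' Set.Ioo 0 t₀) with hLdef
  have hne : (Set.Ioo (0:ℝ) t₀).Nonempty := Set.nonempty_Ioo.2 ht0
  have hsub : Set.Ioo 0 t₀ ⊆ Set.Ico 0 T := fun s hs => ⟨hs.1.le, hs.2.trans htT⟩
  have hub : ∀ y ∈ a '' Set.Ioo 0 t₀, y ≤ a t₀ := by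
    rintro y ⟨s, hs, rfl⟩
    exact ha (hsub hs) ⟨ht0.le, htT⟩ hs.2.le
  have hbdd : BddAbove (a '' Set.Ioo 0 t₀) := ⟨a t₀, hub⟩
  have htend : Filter.Tendsto a (nhdsWithin t₀ (Set.Iio t₀)) (nhds L) :=
    MonotoneOn.tendsto_nhdsWithin_Ioo_left hne
      (fun s hs u hu hsu => ha (hsub hs) (hsub hu) hsu) hbdd
  have hLle : L ≤ a t₀ := csSup_le (hne.image a) hub
  rcases hLle.lt_or_eq with hlt | heq
  swap
  · rwa [heq] at htend
  exfalso
  -- continuity of g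
  have hgc : Continuous g := by
    rw [continuous_iff_continuousAt]; exact fun t => (hg t).continuousAt
  have hμd : ∀ x : ℝ, HasDerivAt μ (deriv μ x) x := fun x =>
    ((hμ.differentiable one_ne_zero) x).hasDerivAt
  have hμc : Continuous μ := hμ.continuous
  have hμ'c : Continuous (deriv μ) := hμ.continuous_deriv le_rfl
  -- slice continuity on the big set
  have hslice : ∀ f : ℝ × ℝ → ℝ, ContinuousOn f (Set.Icc 0 T ×ˢ (Set.univ : Set ℝ)) →
      ∀ t ∈ Set.Icc (0:ℝ) T, Continuous fun x : ℝ => f (t, x) := by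
    intro f hf t htm
    rw [← continuousOn_univ]
    exact hf.comp ((continuous_const.prodMk continuous_id).continuousOn)
      (fun x _ => ⟨htm, trivial⟩)
  -- Step A: strict negativity of Θ(t₀,·) just below a t₀
  obtain ⟨δ, hδ0, hδ⟩ : ∃ δ > 0, ∀ z ∈ Set.Icc (a t₀ - δ) (a t₀), 0 < hx (t₀, z) := by
    have hk : Continuous fun z => hx (t₀, z) := hslice hx hhxc t₀ ht₀m
    have hev : ∀ᶠ z in nhds (a t₀), 0 < hx (t₀, z) :=
      hk.continuousAt.preimage_mem_nhds (Ioi_mem_nhds h6)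
    obtain ⟨ε, hε0, hε⟩ := Metric.eventually_nhds_iff.1 hev
    refine ⟨ε / 2, half_pos hε0, fun z hz => hε ?_⟩
    rw [Real.dist_eq, abs_lt]
    constructor <;> [linarith [hz.1]; linarith [hz.2, hε0]]
  have hΘneg : ∀ z ∈ Set.Icc (a t₀ - δ) (a t₀), z < a t₀ →
      g' t₀ - r * g t₀ + h (t₀, z) < 0 := by
    have hsm : StrictMonoOn (fun z => h (t₀, z)) (Set.Icc (a t₀ - δ) (a t₀)) := by
      apply strictMonoOn_of_deriv_pos (convex_Icc _ _)
      · exact (hslice h hh t₀ ht₀m).continuousOn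
      · intro z hz
        rw [(hhx (t₀, z) ⟨ht₀m, trivial⟩).deriv]
        rw [interior_Icc] at hz
        exact hδ z (Set.mem_Icc_of_Ioo hz)
    intro z hz hzlt
    have h1' : h (t₀, z) < h (t₀, a t₀) :=
      hsm hz (Set.right_mem_Icc.2 (by linarith)) hzlt
    have := h5 (a t₀) le_rfl
    linarith
  -- Step B: choose x₁ < x₂ in the gap
  set m := min δ (a t₀ - L) with hmdef
  have hm0 : 0 < m := lt_min hδ0 (by linarith)
  set x₁ := a t₀ - m / 2 with hx₁def
  set x₂ := a t₀ - m / 4 with hx₂def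
  have hx12 : x₁ < x₂ := by simp only [hx₁def, hx₂def]; linarith
  have hx2lt : x₂ < a t₀ := by simp only [hx₂def]; linarith
  have hLx1 : L < x₁ := by
    have : m ≤ a t₀ - L := min_le_right _ _
    simp only [hx₁def]; linarith
  have hx1δ : a t₀ - δ ≤ x₁ := by
    have : m ≤ δ := min_le_left _ _
    simp only [hx₁def]; linarith
  have hicc : Set.uIcc x₁ x₂ = Set.Icc x₁ x₂ := Set.uIcc_of_le hx12.le
  -- Step C: the strip lies in C
  have hstrip : ∀ t ∈ Set.Ioo (t₀ / 2) t₀, ∀ x ∈ Set.Icc x₁ x₂, (t, x) ∈ C := by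
    intro t htm x hxm
    rw [hC]
    refine ⟨⟨by linarith [htm.1], by linarith [htm.2]⟩, ?_⟩
    have hat : a t ≤ L := le_csSup hbdd ⟨t, ⟨by linarith [htm.1], htm.2⟩, rfl⟩
    calc a t ≤ L := hat
      _ < x₁ := hLx1
      _ ≤ x := hxm.1
  -- test function
  set φ : ℝ → ℝ := fun x => (x - x₁) ^ 2 * (x₂ - x) ^ 2 with hφdef
  set φ' : ℝ → ℝ := fun x => 2 * (x - x₁) * (x₂ - x) ^ 2 - (x - x₁) ^ 2 * (2 * (x₂ - x))
    with hφ'def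
  set φ'' : ℝ → ℝ := fun x => 2 * (x₂ - x) ^ 2 - 8 * (x - x₁) * (x₂ - x) + 2 * (x - x₁) ^ 2
    with hφ''def
  have hφd : ∀ x, HasDerivAt φ (φ' x) x := by
    intro x
    have := (((hasDerivAt_id x).sub_const x₁).pow 2).mul (((hasDerivAt_id x).const_sub x₂).pow 2)
    exact this.congr_deriv (by simp only [hφ'def, id_eq, Pi.pow_apply]; ring)
  have hφ'd : ∀ x, HasDerivAt φ' (φ'' x) x := by
    intro x
    have := ((((hasDerivAt_id x).sub_const x₁).const_mul 2).mul
        (((hasDerivAt_id x).const_sub x₂).pow 2)).sub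
      ((((hasDerivAt_id x).sub_const x₁).pow 2).mul
        (((hasDerivAt_id x).const_sub x₂).const_mul 2))
    exact this.congr_deriv (by simp only [hφ''def, id_eq, Pi.pow_apply]; ring)
  have hφc : Continuous φ := by
    simp only [hφdef]; fun_prop
  have hφ'c : Continuous φ' := by
    simp only [hφ'def]; fun_prop
  have hφ''c : Continuous φ'' := by
    simp only [hφ''def]; fun_prop
  have hφx₁ : φ x₁ = 0 := by simp [hφdef]
  have hφx₂ : φ x₂ = 0 := by simp [hφdef]
  have hφ'x₁ : φ' x₁ = 0 := by simp [hφ'def]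
  have hφ'x₂ : φ' x₂ = 0 := by simp [hφ'def]
  have hφnn : ∀ x, 0 ≤ φ x := fun x => by positivity
  have hφpos : ∀ x ∈ Set.Ioo x₁ x₂, 0 < φ x := by
    intro x hxm
    have h1' : 0 < x - x₁ := by linarith [hxm.1]
    have h2' : 0 < x₂ - x := by linarith [hxm.2]
    positivity
  set ψ : ℝ → ℝ := fun x => σ₀ ^ 2 / 2 * φ'' x - (deriv μ x * φ x + μ x * φ' x) with hψdef
  have hψc : Continuous ψ := by
    apply ((continuous_const.mul hφ''c).sub ((hμ'c.mul hφc).add (hμc.mul hφ'c)))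
  -- vt ≤ g' on the strip
  have hvtle : ∀ t ∈ Set.Ioo (t₀ / 2) t₀, ∀ x ∈ Set.Icc x₁ x₂, vt (t, x) ≤ g' t := by
    intro t htm x hxm
    have hmem := hstrip t htm x hxm
    by_contra hcon
    push_neg at hcon
    have hd : HasDerivAt (fun s => v (s, x) - g s) (vt (t, x) - g' t) t :=
      (hvt (t, x) hmem).sub (hg t)
    have hpos : 0 < vt (t, x) - g' t := sub_pos.2 hcon
    have hslope := hasDerivAt_iff_tendsto_slope.1 hd
    have h2' : Filter.Tendsto (slope (fun s => v (s, x) - g s) t)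
        (nhdsWithin t (Set.Ioi t)) (nhds (vt (t, x) - g' t)) :=
      hslope.mono_left (nhdsWithin_mono t (fun s hs => LT.lt.ne' hs))
    have hev : ∀ᶠ s in nhdsWithin t (Set.Ioi t),
        slope (fun s => v (s, x) - g s) t s ∈ Set.Ioi 0 := h2' (Ioi_mem_nhds hpos)
    have hev2 : ∀ᶠ s in nhdsWithin t (Set.Ioi t), s ∈ Set.Ioo t T :=
      Ioo_mem_nhdsGT_of_mem ⟨le_rfl, by linarith [htm.2]⟩
    obtain ⟨s, hs1, hs2⟩ := (hev.and hev2).exists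
    have hle := h3 x t ⟨by linarith [htm.1], by linarith [htm.2]⟩ s
      ⟨by linarith [hs2.1, htm.1], hs2.2.le⟩ hs2.1.le
    rw [Set.mem_Ioi, slope_def_field] at hs1
    have hs1' : 0 < (v (s, x) - g s - (v (t, x) - g t)) / (s - t) := hs1
    have hst : 0 < s - t := sub_pos.2 hs2.1
    have hmul := mul_pos hs1' hst
    rw [div_mul_cancel₀ _ (ne_of_gt hst)] at hmul
    linarith
  -- key inequality for each t in the strip
  have key : ∀ t ∈ Set.Ioo (t₀ / 2) t₀,
      0 ≤ ∫ x in x₁..x₂, ((g' t - r * g t + h (t, x)) * φ x + v (t, x) * ψ x) := by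
    intro t htm
    have htIcc : t ∈ Set.Icc (0:ℝ) T := ⟨by linarith [htm.1], by linarith [htm.2]⟩
    have cv : ContinuousOn (fun x => v (t, x)) (Set.uIcc x₁ x₂) :=
      (hslice v hv t htIcc).continuousOn
    have ch : ContinuousOn (fun x => h (t, x)) (Set.uIcc x₁ x₂) :=
      (hslice h hh t htIcc).continuousOn
    have cvx : ContinuousOn (fun x => vx (t, x)) (Set.uIcc x₁ x₂) := by
      rw [hicc]
      exact hvxc.comp ((continuous_const.prodMk continuous_id).continuousOn)
        (fun x hxm => hstrip t htm x hxm)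
    have cvxx : ContinuousOn (fun x => vxx (t, x)) (Set.uIcc x₁ x₂) := by
      rw [hicc]
      exact hvxxc.comp ((continuous_const.prodMk continuous_id).continuousOn)
        (fun x hxm => hstrip t htm x hxm)
    -- integration by parts identities
    have eqA : (∫ x in x₁..x₂, (vxx (t, x) * φ x + vx (t, x) * φ' x)) = 0 := by
      have := intervalIntegral.integral_deriv_mul_eq_sub (a := x₁) (b := x₂)
        (u := fun x => vx (t, x)) (v := φ) (u' := fun x => vxx (t, x)) (v' := φ')
        (fun x hxm => hvxx (t, x) (hstrip t htm x (hicc ▸ hxm)))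
        (fun x _ => hφd x)
        cvxx.intervalIntegrable (hφ'c.continuousOn.intervalIntegrable)
      simpa [hφx₁, hφx₂] using this
    have eqB : (∫ x in x₁..x₂, (vx (t, x) * φ' x + v (t, x) * φ'' x)) = 0 := by
      have := intervalIntegral.integral_deriv_mul_eq_sub (a := x₁) (b := x₂)
        (u := fun x => v (t, x)) (v := φ') (u' := fun x => vx (t, x)) (v' := φ'')
        (fun x hxm => hvx (t, x) (hstrip t htm x (hicc ▸ hxm)))
        (fun x _ => hφ'd x)
        cvx.intervalIntegrable (hφ''c.continuousOn.intervalIntegrable)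
      simpa [hφ'x₁, hφ'x₂] using this
    have eqC : (∫ x in x₁..x₂,
        (vx (t, x) * (μ x * φ x) + v (t, x) * (deriv μ x * φ x + μ x * φ' x))) = 0 := by
      have := intervalIntegral.integral_deriv_mul_eq_sub (a := x₁) (b := x₂)
        (u := fun x => v (t, x)) (v := fun x => μ x * φ x) (u' := fun x => vx (t, x))
        (v' := fun x => deriv μ x * φ x + μ x * φ' x)
        (fun x hxm => hvx (t, x) (hstrip t htm x (hicc ▸ hxm)))
        (fun x _ => (hμd x).mul (hφd x))
        cvx.intervalIntegrable
        (((hμ'c.mul hφc).add (hμc.mul hφ'c)).continuousOn.intervalIntegrable)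
      simpa [hφx₁, hφx₂] using this
    -- pointwise nonnegativity of the PDE expression times φ
    have hJ : 0 ≤ ∫ x in x₁..x₂,
        ((g' t - r * g t + h (t, x)) + σ₀ ^ 2 / 2 * vxx (t, x) + μ x * vx (t, x)) * φ x := by
      apply intervalIntegral.integral_nonneg hx12.le
      intro x hxm
      have hmem := hstrip t htm x hxm
      have h4' : 0 ≤ vt (t, x) + σ₀ ^ 2 / 2 * vxx (t, x) + μ x * vx (t, x)
          - r * v (t, x) + h (t, x) := h4 (t, x) hmem
      have hvt' := hvtle t htm x hxm
      have h2' := h2 t htIcc x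
      have hrv : r * g t ≤ r * v (t, x) := mul_le_mul_of_nonneg_left h2' hr
      apply mul_nonneg _ (hφnn x)
      linarith
    -- integrability facts
    have i1 : IntervalIntegrable (fun x => vxx (t, x) * φ x + vx (t, x) * φ' x)
        volume x₁ x₂ :=
      ((cvxx.mul hφc.continuousOn).add (cvx.mul hφ'c.continuousOn)).intervalIntegrable
    have i2 : IntervalIntegrable (fun x => vx (t, x) * φ' x + v (t, x) * φ'' x)
        volume x₁ x₂ :=
      ((cvx.mul hφ'c.continuousOn).add (cv.mul hφ''c.continuousOn)).intervalIntegrable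
    have i3 : IntervalIntegrable
        (fun x => vx (t, x) * (μ x * φ x) + v (t, x) * (deriv μ x * φ x + μ x * φ' x))
        volume x₁ x₂ :=
      ((cvx.mul ((hμc.mul hφc).continuousOn)).add
        (cv.mul (((hμ'c.mul hφc).add (hμc.mul hφ'c)).continuousOn))).intervalIntegrable
    have iJ : IntervalIntegrable
        (fun x => ((g' t - r * g t + h (t, x)) + σ₀ ^ 2 / 2 * vxx (t, x)
          + μ x * vx (t, x)) * φ x) volume x₁ x₂ :=
      ((((continuousOn_const.add ch).add (continuousOn_const.mul cvxx)).add
        (hμc.continuousOn.mul cvx)).mul hφc.continuousOn).intervalIntegrable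
    have split : (∫ x in x₁..x₂, ((g' t - r * g t + h (t, x)) * φ x + v (t, x) * ψ x))
        = ∫ x in x₁..x₂,
            (((g' t - r * g t + h (t, x)) + σ₀ ^ 2 / 2 * vxx (t, x) + μ x * vx (t, x)) * φ x
            - σ₀ ^ 2 / 2 * (vxx (t, x) * φ x + vx (t, x) * φ' x)
            + σ₀ ^ 2 / 2 * (vx (t, x) * φ' x + v (t, x) * φ'' x)
            - (vx (t, x) * (μ x * φ x) + v (t, x) * (deriv μ x * φ x + μ x * φ' x))) := by
      apply intervalIntegral.integral_congr
      intro x hxm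
      simp only [hψdef]
      ring
    rw [split, intervalIntegral.integral_sub
        ((iJ.sub (i1.const_mul _)).add (i2.const_mul _)) i3,
      intervalIntegral.integral_add (iJ.sub (i1.const_mul _)) (i2.const_mul _),
      intervalIntegral.integral_sub iJ (i1.const_mul _),
      intervalIntegral.integral_const_mul, intervalIntegral.integral_const_mul,
      eqA, eqB, eqC]
    simpa using hJ
  -- two-variable continuity of the integrand
  have hFc : ContinuousOn
      (fun p : ℝ × ℝ => (g' p.1 - r * g p.1 + h p) * φ p.2 + v p * ψ p.2)
      (Set.Icc 0 T ×ˢ (Set.univ : Set ℝ)) := by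
    apply ContinuousOn.add
    · exact (ContinuousOn.add
        (((hg'.comp continuous_fst).sub
          (continuous_const.mul (hgc.comp continuous_fst))).continuousOn) hh).mul
        ((hφc.comp continuous_snd).continuousOn)
    · exact hv.mul ((hψc.comp continuous_snd).continuousOn)
  -- uniform bound on a compact rectangle
  obtain ⟨M, hM⟩ : ∃ M, ∀ p ∈ Set.Icc (t₀ / 2) t₀ ×ˢ Set.Icc x₁ x₂,
      ‖(g' p.1 - r * g p.1 + h p) * φ p.2 + v p * ψ p.2‖ ≤ M := by
    apply IsCompact.exists_bound_of_continuousOn (isCompact_Icc.prod isCompact_Icc)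
    exact hFc.mono (Set.prod_mono (Set.Icc_subset_Icc (by linarith) (by linarith))
      (Set.subset_univ _))
  have hmemIoo : Set.Ioo (t₀ / 2) t₀ ∈ nhdsWithin t₀ (Set.Iio t₀) :=
    Ioo_mem_nhdsLT (by linarith)
  -- dominated convergence
  have hlim : Filter.Tendsto
      (fun t => ∫ x in x₁..x₂, ((g' t - r * g t + h (t, x)) * φ x + v (t, x) * ψ x))
      (nhdsWithin t₀ (Set.Iio t₀))
      (nhds (∫ x in x₁..x₂, ((g' t₀ - r * g t₀ + h (t₀, x)) * φ x + v (t₀, x) * ψ x))) := by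
    apply intervalIntegral.tendsto_integral_filter_of_dominated_convergence (fun _ => M)
    · filter_upwards [hmemIoo] with t htm
      have htIcc : t ∈ Set.Icc (0:ℝ) T := ⟨by linarith [htm.1], by linarith [htm.2]⟩
      exact (((continuous_const.add (hslice h hh t htIcc)).mul hφc).add
        ((hslice v hv t htIcc).mul hψc)).aestronglyMeasurable
    · filter_upwards [hmemIoo] with t htm
      apply ae_of_all
      intro x hxm
      rw [Set.uIoc_of_le hx12.le] at hxm
      exact hM (t, x) ⟨⟨htm.1.le, htm.2.le⟩, Set.Ioc_subset_Icc_self hxm⟩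
    · exact intervalIntegrable_const
    · apply ae_of_all
      intro x hxm
      have hc : ContinuousWithinAt
          (fun p : ℝ × ℝ => (g' p.1 - r * g p.1 + h p) * φ p.2 + v p * ψ p.2)
          (Set.Icc 0 T ×ˢ (Set.univ : Set ℝ)) (t₀, x) := hFc (t₀, x) ⟨ht₀m, trivial⟩
      have htt : Filter.Tendsto (fun t => ((t : ℝ), x)) (nhdsWithin t₀ (Set.Iio t₀))
          (nhdsWithin (t₀, x) (Set.Icc 0 T ×ˢ (Set.univ : Set ℝ))) := by
        rw [tendsto_nhdsWithin_iff]
        constructor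
        · exact ((continuous_id.prodMk continuous_const).tendsto t₀).mono_left
            nhdsWithin_le_nhds
        · filter_upwards [hmemIoo] with t htm
          exact ⟨⟨by linarith [htm.1], by linarith [htm.2]⟩, trivial⟩
      have := hc.tendsto.comp htt
      exact this
  -- the limit is nonnegative
  have hge : 0 ≤ ∫ x in x₁..x₂, ((g' t₀ - r * g t₀ + h (t₀, x)) * φ x + v (t₀, x) * ψ x) :=
    ge_of_tendsto hlim (by filter_upwards [hmemIoo] with t htm using key t htm)
  -- evaluate the limit integral
  have hveq : ∀ x ∈ Set.uIcc x₁ x₂, v (t₀, x) = g t₀ := by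
    intro x hxm
    rw [hicc] at hxm
    exact h1 t₀ ⟨ht0.le, htT⟩ x (by linarith [hxm.2])
  have hψ0 : (∫ x in x₁..x₂, ψ x) = 0 := by
    have e1 : (∫ x in x₁..x₂, φ'' x) = φ' x₂ - φ' x₁ :=
      intervalIntegral.integral_eq_sub_of_hasDerivAt (fun x _ => hφ'd x)
        (hφ''c.continuousOn.intervalIntegrable)
    have e2 : (∫ x in x₁..x₂, (deriv μ x * φ x + μ x * φ' x)) = μ x₂ * φ x₂ - μ x₁ * φ x₁ :=
      intervalIntegral.integral_eq_sub_of_hasDerivAt (fun x _ => (hμd x).mul (hφd x))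
        (((hμ'c.mul hφc).add (hμc.mul hφ'c)).continuousOn.intervalIntegrable)
    have : (∫ x in x₁..x₂, ψ x)
        = ∫ x in x₁..x₂, (σ₀ ^ 2 / 2 * φ'' x - (deriv μ x * φ x + μ x * φ' x)) := rfl
    rw [this, intervalIntegral.integral_sub (f := fun x => σ₀ ^ 2 / 2 * φ'' x)
        (g := fun x => deriv μ x * φ x + μ x * φ' x)
        ((hφ''c.continuousOn.intervalIntegrable).const_mul _)
        (((hμ'c.mul hφc).add (hμc.mul hφ'c)).continuousOn.intervalIntegrable),
      intervalIntegral.integral_const_mul, e1, e2, hφx₁, hφx₂, hφ'x₁, hφ'x₂]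
    ring
  have heval : (∫ x in x₁..x₂, ((g' t₀ - r * g t₀ + h (t₀, x)) * φ x + v (t₀, x) * ψ x))
      = ∫ x in x₁..x₂, (g' t₀ - r * g t₀ + h (t₀, x)) * φ x := by
    have e0 : (∫ x in x₁..x₂, ((g' t₀ - r * g t₀ + h (t₀, x)) * φ x + v (t₀, x) * ψ x))
        = ∫ x in x₁..x₂, ((g' t₀ - r * g t₀ + h (t₀, x)) * φ x + g t₀ * ψ x) := by
      apply intervalIntegral.integral_congr
      intro x hxm
      simp only [hveq x hxm]
    rw [e0, intervalIntegral.integral_add (f := fun x => (g' t₀ - r * g t₀ + h (t₀, x)) * φ x)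
        (g := fun x => g t₀ * ψ x)
        ((continuousOn_const.add ((hslice h hh t₀ ht₀m).continuousOn)).mul
          hφc.continuousOn).intervalIntegrable
        ((hψc.continuousOn.intervalIntegrable).const_mul _),
      intervalIntegral.integral_const_mul, hψ0]
    ring
  -- strict negativity of the Θ integral
  have hneg : (∫ x in x₁..x₂, (g' t₀ - r * g t₀ + h (t₀, x)) * φ x) < 0 := by
    have hpos : 0 < ∫ x in x₁..x₂, -((g' t₀ - r * g t₀ + h (t₀, x)) * φ x) := by
      apply intervalIntegral_pos_of_pos_on
      · exact (((continuousOn_const.add ((hslice h hh t₀ ht₀m).continuousOn)).mul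
          hφc.continuousOn).neg).intervalIntegrable
      · intro x hxm
        have hxIcc : x ∈ Set.Icc (a t₀ - δ) (a t₀) :=
          ⟨by linarith [hxm.1], by linarith [hxm.2]⟩
        have hΘ := hΘneg x hxIcc (by linarith [hxm.2])
        have hφp := hφpos x hxm
        nlinarith
      · exact hx12
    rw [intervalIntegral.integral_neg] at hpos
    linarith
  rw [heval] at hge
  linarith
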